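/- Let D be a Dedekind domain, let H be a congruence subgroup of SL₂(D), let g₁, g₂ ∈ SL₂(D), and let 𝔮₁, 𝔮₂ be nonzero ideals of D such that gᵢ·T(x)·gᵢ⁻¹ ∈ H for all x ∈ 𝔮ᵢ (i = 1,2). Then there exists g₀ ∈ SL₂(D) such that g₀·T(x)·g₀⁻¹ ∈ H for all x ∈ 𝔮₁ + 𝔮₂. -/

import Mathlib

open Matrix

/-- The translation matrix `T(r) = [[1, r], [0, 1]]` in `SL₂(R)`. -/
def Tm (R : Type*) [CommRing R] (r : R) : Matrix.SpecialLinearGroup (Fin 2) R :=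
  ⟨!![1, r; 0, 1], by simp [Matrix.det_fin_two_of]⟩

/-- The principal congruence subgroup `SL₂(R, 𝔮)`, the kernel of reduction mod `𝔮`. -/
def SLmod (R : Type*) [CommRing R] (q : Ideal R) :
    Subgroup (Matrix.SpecialLinearGroup (Fin 2) R) :=
  (Matrix.SpecialLinearGroup.map (Ideal.Quotient.mk q)).ker

/-- `H` is a congruence subgroup: it contains a principal congruence subgroup of
nonzero level. -/
def IsCongruence {R : Type*} [CommRing R]
    (H : Subgroup (Matrix.SpecialLinearGroup (Fin 2) R)) : Prop :=
  ∃ q : Ideal R, q ≠ ⊥ ∧ SLmod R q ≤ H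

/-- `q` is the level `l(H)` of `H`: the largest ideal all of whose associated translations
lie in the normal core of `H` (equivalently, the largest ideal contained in the
quasi-level of `H`). -/
def IsLevel {R : Type*} [CommRing R]
    (H : Subgroup (Matrix.SpecialLinearGroup (Fin 2) R)) (q : Ideal R) : Prop :=
  (∀ r ∈ q, Tm R r ∈ H.normalCore) ∧
    ∀ I : Ideal R, (∀ r ∈ I, Tm R r ∈ H.normalCore) → I ≤ q

section Helpers

variable {D : Type*} [CommRing D]

/-- entrywise congruence of two elements of `SL₂` modulo an ideal. -/
def EntryCong (J : Ideal D) (A B : Matrix.SpecialLinearGroup (Fin 2) D) : Prop :=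
  ∀ i j, A.1 i j - B.1 i j ∈ J

lemma mem_SLmod_iff {J : Ideal D} {X : Matrix.SpecialLinearGroup (Fin 2) D} :
    X ∈ SLmod D J ↔ ∀ i j, X.1 i j - (1 : Matrix (Fin 2) (Fin 2) D) i j ∈ J := by
  have h1 : ∀ i j : Fin 2, (1 : Matrix (Fin 2) (Fin 2) (D ⧸ J)) i j
      = Ideal.Quotient.mk J ((1 : Matrix (Fin 2) (Fin 2) D) i j) := by
    intro i j
    by_cases h : i = j <;> simp [Matrix.one_apply, h]
  rw [SLmod, MonoidHom.mem_ker]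
  constructor
  · intro h i j
    have h2 : ((Matrix.SpecialLinearGroup.map (Ideal.Quotient.mk J)) X).1 i j
        = (1 : Matrix (Fin 2) (Fin 2) (D ⧸ J)) i j := by rw [h]; rfl
    rw [Matrix.SpecialLinearGroup.map_apply_coe, RingHom.mapMatrix_apply, Matrix.map_apply,
      h1] at h2
    rwa [← Ideal.Quotient.mk_eq_mk_iff_sub_mem]

  · intro h
    ext i j
    rw [Matrix.SpecialLinearGroup.map_apply_coe, RingHom.mapMatrix_apply, Matrix.map_apply]
    have : (1 : Matrix.SpecialLinearGroup (Fin 2) (D ⧸ J)).1 i j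
        = (1 : Matrix (Fin 2) (Fin 2) (D ⧸ J)) i j := rfl
    rw [this, h1]
    exact (Ideal.Quotient.mk_eq_mk_iff_sub_mem _ _).2 (h i j)

lemma SLmod_mono {I J : Ideal D} (h : I ≤ J) : SLmod D I ≤ SLmod D J := by
  intro X hX
  rw [mem_SLmod_iff] at hX ⊢
  exact fun i j => h (hX i j)

lemma mul_inv_mem_SLmod {J : Ideal D} {A B : Matrix.SpecialLinearGroup (Fin 2) D}
    (h : EntryCong J A B) : A * B⁻¹ ∈ SLmod D J := by
  rw [mem_SLmod_iff]
  intro i j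
  have hB : (B.1) * ((B⁻¹).1) = (1 : Matrix (Fin 2) (Fin 2) D) := by
    rw [← Matrix.SpecialLinearGroup.coe_mul, mul_inv_cancel]
    rfl
  have key : (A * B⁻¹).1 i j - (1 : Matrix (Fin 2) (Fin 2) D) i j
      = ∑ k, (A.1 i k - B.1 i k) * (B⁻¹).1 k j := by
    rw [Matrix.SpecialLinearGroup.coe_mul, ← hB, Matrix.mul_apply, Matrix.mul_apply,
      ← Finset.sum_sub_distrib]
    simp [sub_mul]
  rw [key]
  exact Ideal.sum_mem _ fun k _ => Ideal.mul_mem_right _ _ (h i k)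

lemma Tm_add (r s : D) : Tm D (r + s) = Tm D r * Tm D s := by
  apply Subtype.ext
  rw [Matrix.SpecialLinearGroup.coe_mul]
  show !![1, r + s; 0, 1] = !![(1 : D), r; 0, 1] * !![1, s; 0, 1]
  rw [Matrix.mul_fin_two]
  ext i j
  fin_cases i <;> fin_cases j <;> simp <;> ring

lemma conj_Tm_coe (g : Matrix.SpecialLinearGroup (Fin 2) D) (x : D) :
    (g * Tm D x * g⁻¹).1 = !![1 - x * (g.1 0 0 * g.1 1 0), x * (g.1 0 0 * g.1 0 0);
        -(x * (g.1 1 0 * g.1 1 0)), 1 + x * (g.1 0 0 * g.1 1 0)] := by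
  have hdet : g.1 0 0 * g.1 1 1 - g.1 0 1 * g.1 1 0 = 1 := by
    have h2 := g.2
    rwa [Matrix.det_fin_two] at h2
  rw [Matrix.SpecialLinearGroup.coe_mul, Matrix.SpecialLinearGroup.coe_mul,
    Matrix.SpecialLinearGroup.SL2_inv_expl g]
  ext i j
  fin_cases i <;> fin_cases j <;>
    rw [Matrix.mul_apply] <;> simp [Tm, Matrix.mul_apply, Fin.sum_univ_two] <;>
    first
      | linear_combination hdet
      | linear_combination (x : D) * hdet
      | linear_combination (-x : D) * hdet
      | ring

lemma entryCong_conj {b : Ideal D} {g₀ g₁ : Matrix.SpecialLinearGroup (Fin 2) D}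
    (hA : g₀.1 0 0 - g₁.1 0 0 ∈ b) (hC : g₀.1 1 0 - g₁.1 1 0 ∈ b)
    {a : Ideal D} {x : D} (hx : x ∈ a) :
    EntryCong (a * b) (g₀ * Tm D x * g₀⁻¹) (g₁ * Tm D x * g₁⁻¹) := by
  intro i j
  rw [conj_Tm_coe, conj_Tm_coe]
  set a₀ := g₀.1 0 0 with ha₀
  set c₀ := g₀.1 1 0 with hc₀
  set a₁ := g₁.1 0 0 with ha₁
  set c₁ := g₁.1 1 0 with hc₁
  have hac : a₀ * c₀ - a₁ * c₁ ∈ b := by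
    have : a₀ * c₀ - a₁ * c₁ = a₀ * (c₀ - c₁) + c₁ * (a₀ - a₁) := by ring
    rw [this]
    exact add_mem (Ideal.mul_mem_left _ _ hC) (Ideal.mul_mem_left _ _ hA)
  have haa : a₀ * a₀ - a₁ * a₁ ∈ b := by
    have : a₀ * a₀ - a₁ * a₁ = (a₀ + a₁) * (a₀ - a₁) := by ring
    rw [this]
    exact Ideal.mul_mem_left _ _ hA
  have hcc : c₀ * c₀ - c₁ * c₁ ∈ b := by
    have : c₀ * c₀ - c₁ * c₁ = (c₀ + c₁) * (c₀ - c₁) := by ring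
    rw [this]
    exact Ideal.mul_mem_left _ _ hC
  fin_cases i <;> fin_cases j
  · show (1 - x * (a₀ * c₀)) - (1 - x * (a₁ * c₁)) ∈ a * b
    have h5 : (1 - x * (a₀ * c₀)) - (1 - x * (a₁ * c₁)) = -(x * (a₀ * c₀ - a₁ * c₁)) := by ring
    rw [h5]
    exact neg_mem (Ideal.mul_mem_mul hx hac)
  · show x * (a₀ * a₀) - x * (a₁ * a₁) ∈ a * b
    have h5 : x * (a₀ * a₀) - x * (a₁ * a₁) = x * (a₀ * a₀ - a₁ * a₁) := by ring
    rw [h5]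
    exact Ideal.mul_mem_mul hx haa
  · show -(x * (c₀ * c₀)) - -(x * (c₁ * c₁)) ∈ a * b
    have h5 : -(x * (c₀ * c₀)) - -(x * (c₁ * c₁)) = -(x * (c₀ * c₀ - c₁ * c₁)) := by ring
    rw [h5]
    exact neg_mem (Ideal.mul_mem_mul hx hcc)
  · show (1 + x * (a₀ * c₀)) - (1 + x * (a₁ * c₁)) ∈ a * b
    have h5 : (1 + x * (a₀ * c₀)) - (1 + x * (a₁ * c₁)) = x * (a₀ * c₀ - a₁ * c₁) := by ring
    rw [h5]
    exact Ideal.mul_mem_mul hx hac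

end Helpers

section Approx

open UniqueFactorizationMonoid

variable {D : Type*} [CommRing D] [IsDomain D] [IsDedekindDomain D]

lemma coprime_of_not_le_maximal {I m : Ideal D} (hm : m.IsMaximal) (hIm : ¬ I ≤ m) :
    IsCoprime I m := by
  rw [Ideal.isCoprime_iff_sup_eq]
  by_contra hne2
  have h1 : m < I ⊔ m := lt_of_le_of_ne le_sup_right (fun h => hIm (h ▸ le_sup_left))
  exact hne2 (hm.1.2 _ h1)

lemma exists_SL2_congruent {J : Ideal D} (hJ : J ≠ ⊥) (a b c d : D)
    (hdet : a * d - b * c - 1 ∈ J) :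
    ∃ g₀ : Matrix.SpecialLinearGroup (Fin 2) D,
      g₀.1 0 0 - a ∈ J ∧ g₀.1 0 1 - b ∈ J ∧ g₀.1 1 0 - c ∈ J ∧ g₀.1 1 1 - d ∈ J := by
  classical
  by_cases hJt : J = ⊤
  · refine ⟨1, ?_, ?_, ?_, ?_⟩ <;> rw [hJt] <;> exact Submodule.mem_top
  obtain ⟨t, htJ, ht0⟩ := Submodule.exists_mem_ne_zero_of_ne_bot hJ
  obtain ⟨a', ha'0, ha'J⟩ : ∃ a' : D, a' ≠ 0 ∧ a' - a ∈ J := by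
    by_cases ha : a = 0
    · exact ⟨t, ht0, by rw [ha, sub_zero]; exact htJ⟩
    · exact ⟨a, ha, by simp⟩
  have hsup : (1 : D) ∈ Ideal.span {a'} ⊔ (Ideal.span {b} ⊔ J) := by
    have h1 : a' * d ∈ Ideal.span {a'} := Ideal.mul_mem_right _ _ (Ideal.subset_span rfl)
    have h2 : b * (-c) ∈ Ideal.span {b} := Ideal.mul_mem_right _ _ (Ideal.subset_span rfl)
    have h3 : (1 : D) - a' * d - b * (-c) ∈ J := by
      have he : (1 : D) - a' * d - b * (-c) = -((a * d - b * c - 1) + (a' - a) * d) := by ring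
      rw [he]
      exact neg_mem (add_mem hdet (Ideal.mul_mem_right _ _ ha'J))
    have he : (1 : D) = a' * d + (b * (-c) + ((1 : D) - a' * d - b * (-c))) := by ring
    rw [he]
    exact add_mem (Submodule.mem_sup_left h1)
      (Submodule.mem_sup_right (add_mem (Submodule.mem_sup_left h2)
        (Submodule.mem_sup_right h3)))
  have hspan : Ideal.span {a'} ≠ ⊥ := by simpa [Ideal.span_singleton_eq_bot] using ha'0
  set PP := (normalizedFactors (Ideal.span {a'})).toFinset with hPP
  have hmemPP : ∀ m : Ideal D, m.IsMaximal → a' ∈ m → m ∈ PP := by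
    intro m hm ham
    rw [hPP, Multiset.mem_toFinset, mem_normalizedFactors_iff hspan]
    have hmne : m ≠ ⊥ := by
      intro h
      rw [h] at ham
      exact ha'0 (by simpa using ham)
    exact ⟨(Ideal.prime_iff_isPrime hmne).2 hm.isPrime,
      Ideal.dvd_iff_le.2 ((Ideal.span_singleton_le_iff_mem _).2 ham)⟩
  have hPPmax : ∀ p ∈ PP, (p : Ideal D).IsMaximal := by
    intro p hp
    rw [hPP, Multiset.mem_toFinset] at hp
    have hprime := prime_of_normalized_factor p hp
    exact Ideal.IsPrime.isMaximal (Ideal.isPrime_of_prime hprime) hprime.ne_zero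
  set PP' := PP.filter (fun p => ¬ J ≤ p) with hPP'
  have hPP'max : ∀ p ∈ PP', (p : Ideal D).IsMaximal := fun p hp =>
    hPPmax p (Finset.mem_filter.1 hp).1
  set Ifun : Option {p : Ideal D // p ∈ PP'} → Ideal D := fun o => o.elim J (fun p => p.1)
    with hIfun
  have hpair : Pairwise (fun i j => IsCoprime (Ifun i) (Ifun j)) := by
    rintro (_ | ⟨p, hp⟩) (_ | ⟨p', hp'⟩) hne
    · exact absurd rfl hne
    · exact coprime_of_not_le_maximal (hPP'max p' hp') (Finset.mem_filter.1 hp').2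
    · exact (coprime_of_not_le_maximal (hPP'max p hp) (Finset.mem_filter.1 hp).2).symm
    · have hvne : p ≠ p' := by
        intro h
        exact hne (by simp [h])
      exact Ideal.isCoprime_iff_sup_eq.2 ((hPP'max p hp).coprime_of_ne (hPP'max p' hp') hvne)
  obtain ⟨s, hs⟩ := Ideal.exists_forall_sub_mem_ideal hpair
    (fun o => o.elim 0 (fun _ => 1 - b))
  have hsJ : s ∈ J := by simpa [hIfun] using hs none
  have hsp : ∀ p ∈ PP', s - (1 - b) ∈ p := fun p hp => hs (some ⟨p, hp⟩)
  have hco : Ideal.span {a'} ⊔ Ideal.span {b + s} = ⊤ := by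
    by_contra hne2
    obtain ⟨m, hm, hlem⟩ := Ideal.exists_le_maximal _ hne2
    have ham : a' ∈ m := hlem (Submodule.mem_sup_left (Ideal.subset_span rfl))
    have hbm : b + s ∈ m := hlem (Submodule.mem_sup_right (Ideal.subset_span rfl))
    have hmPP := hmemPP m hm ham
    by_cases hJm : J ≤ m
    · have hsm : s ∈ m := hJm hsJ
      have hbm0 : b ∈ m := by
        have : b = (b + s) - s := by ring
        rw [this]
        exact sub_mem hbm hsm
      have h1m : (1 : D) ∈ m := by
        refine (sup_le ((Ideal.span_singleton_le_iff_mem _).2 ham)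
          (sup_le ((Ideal.span_singleton_le_iff_mem _).2 hbm0) hJm)) hsup
      exact hm.ne_top ((Ideal.eq_top_iff_one m).2 h1m)
    · have hmPP' : m ∈ PP' := Finset.mem_filter.2 ⟨hmPP, hJm⟩
      have h2 := hsp m hmPP'
      have h1m : (1 : D) ∈ m := by
        have he : (1 : D) = (b + s) - (s - (1 - b)) := by ring
        rw [he]
        exact sub_mem hbm h2
      exact hm.ne_top ((Ideal.eq_top_iff_one m).2 h1m)
  have hdet' : a' * d - (b + s) * c - 1 ∈ J := by
    have he : a' * d - (b + s) * c - 1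
        = (a * d - b * c - 1) + (a' - a) * d - s * c := by ring
    rw [he]
    exact sub_mem (add_mem hdet (Ideal.mul_mem_right _ _ ha'J)) (Ideal.mul_mem_right _ _ hsJ)
  have he2 : a' * d - (b + s) * c - 1
      ∈ (J * Ideal.span {a'}) ⊔ (J * Ideal.span {b + s}) := by
    rw [← Ideal.mul_sup, hco, Ideal.mul_top]
    exact hdet'
  obtain ⟨y, hy, z, hz, hyz⟩ := Submodule.mem_sup.1 he2
  obtain ⟨u, huJ, hu⟩ := Ideal.mem_mul_span_singleton.1 hy
  obtain ⟨v, hvJ, hv⟩ := Ideal.mem_mul_span_singleton.1 hz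
  refine ⟨⟨!![a', b + s; c + v, d - u], ?_⟩, ?_, ?_, ?_, ?_⟩
  · rw [Matrix.det_fin_two_of]
    have he : a' * (d - u) - (b + s) * (c + v)
        = (a' * d - (b + s) * c - 1) - (u * a' + v * (b + s)) + 1 := by ring
    rw [he, hu, hv, hyz]
    ring
  · show a' - a ∈ J
    exact ha'J
  · show b + s - b ∈ J
    simpa using hsJ
  · show c + v - c ∈ J
    simpa using hvJ
  · show d - u - d ∈ J
    simpa using huJ

lemma subdet_mem {K : Ideal D} {a b c d a₁ b₁ c₁ d₁ : D}
    (hA : a - a₁ ∈ K) (hB : b - b₁ ∈ K) (hC : c - c₁ ∈ K) (hD : d - d₁ ∈ K) :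
    (a * d - b * c) - (a₁ * d₁ - b₁ * c₁) ∈ K := by
  have he : (a * d - b * c) - (a₁ * d₁ - b₁ * c₁)
      = a * (d - d₁) + d₁ * (a - a₁) - (b * (c - c₁) + c₁ * (b - b₁)) := by ring
  rw [he]
  exact sub_mem (add_mem (Ideal.mul_mem_left _ _ hD) (Ideal.mul_mem_left _ _ hA))
    (add_mem (Ideal.mul_mem_left _ _ hC) (Ideal.mul_mem_left _ _ hB))

lemma exists_SL2_approx {b₁ b₂ : Ideal D} (hb₁ : b₁ ≠ ⊥) (hb₂ : b₂ ≠ ⊥) (hcop : b₁ ⊔ b₂ = ⊤)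
    (g₁ g₂ : Matrix.SpecialLinearGroup (Fin 2) D) :
    ∃ g₀ : Matrix.SpecialLinearGroup (Fin 2) D, EntryCong b₁ g₀ g₁ ∧ EntryCong b₂ g₀ g₂ := by
  have hJ : b₁ ⊓ b₂ ≠ ⊥ := by
    intro h
    rcases Ideal.mul_eq_bot.1 (le_bot_iff.1 (le_trans Ideal.mul_le_inf (le_of_eq h))) with h1 | h1
    exacts [hb₁ h1, hb₂ h1]
  obtain ⟨u, hu, v, hv, huv⟩ := Submodule.mem_sup.1
    (show (1 : D) ∈ b₁ ⊔ b₂ by rw [hcop]; trivial)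
  set A : Fin 2 → Fin 2 → D := fun i j => g₁.1 i j + (g₂.1 i j - g₁.1 i j) * u with hA
  have mem1 : ∀ i j, A i j - g₁.1 i j ∈ b₁ := by
    intro i j
    have he : A i j - g₁.1 i j = (g₂.1 i j - g₁.1 i j) * u := by rw [hA]; ring
    rw [he]
    exact Ideal.mul_mem_left _ _ hu
  have mem2 : ∀ i j, A i j - g₂.1 i j ∈ b₂ := by
    intro i j
    have he : A i j - g₂.1 i j = -((g₂.1 i j - g₁.1 i j) * v) := by
      rw [hA]; linear_combination (g₂.1 i j - g₁.1 i j) * huv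
    rw [he]
    exact neg_mem (Ideal.mul_mem_left _ _ hv)
  have hg₁det : g₁.1 0 0 * g₁.1 1 1 - g₁.1 0 1 * g₁.1 1 0 = 1 := by
    have h2 := g₁.2; rwa [Matrix.det_fin_two] at h2
  have hg₂det : g₂.1 0 0 * g₂.1 1 1 - g₂.1 0 1 * g₂.1 1 0 = 1 := by
    have h2 := g₂.2; rwa [Matrix.det_fin_two] at h2
  have hdet : A 0 0 * A 1 1 - A 0 1 * A 1 0 - 1 ∈ b₁ ⊓ b₂ := by
    constructor
    · have h3 := subdet_mem (mem1 0 0) (mem1 0 1) (mem1 1 0) (mem1 1 1)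
      rwa [hg₁det] at h3
    · have h3 := subdet_mem (mem2 0 0) (mem2 0 1) (mem2 1 0) (mem2 1 1)
      rwa [hg₂det] at h3
  obtain ⟨g₀, h00, h01, h10, h11⟩ := exists_SL2_congruent hJ _ _ _ _ hdet
  have key : ∀ i j, g₀.1 i j - A i j ∈ b₁ ⊓ b₂ := by
    intro i j
    fin_cases i <;> fin_cases j <;> assumption
  refine ⟨g₀, fun i j => ?_, fun i j => ?_⟩
  · have he : g₀.1 i j - g₁.1 i j = (g₀.1 i j - A i j) + (A i j - g₁.1 i j) := by ring
    rw [he]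
    exact add_mem (key i j).1 (mem1 i j)
  · have he : g₀.1 i j - g₂.1 i j = (g₀.1 i j - A i j) + (A i j - g₂.1 i j) := by ring
    rw [he]
    exact add_mem (key i j).2 (mem2 i j)

end Approx

section Split

open UniqueFactorizationMonoid Multiset

variable {D : Type*} [CommRing D] [IsDomain D] [IsDedekindDomain D]

lemma exists_split {q q₁ q₂ : Ideal D} (hq : q ≠ ⊥) (h1 : q₁ ≠ ⊥) (h2 : q₂ ≠ ⊥) :
    ∃ b₁ b₂ : Ideal D, b₁ * b₂ = q ∧ b₁ ⊔ b₂ = ⊤ ∧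
      q₁ ⊔ q₂ ≤ q₁ * b₂ ⊔ q₂ * b₁ := by
  classical
  set P : Ideal D → Prop :=
    fun p => (normalizedFactors q₁).count p ≤ (normalizedFactors q₂).count p with hP
  set F := normalizedFactors q with hF
  have hFprime : ∀ p ∈ F, Prime p := fun p hp => prime_of_normalized_factor p hp
  have hFmax : ∀ p ∈ F, (p : Ideal D).IsMaximal := fun p hp =>
    Ideal.IsPrime.isMaximal (Ideal.isPrime_of_prime (hFprime p hp)) (hFprime p hp).ne_zero
  set b₁ := (F.filter P).prod with hb₁def
  set b₂ := (F.filter (fun p => ¬ P p)).prod with hb₂def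
  have hb₁prime : ∀ p ∈ F.filter P, Prime p := fun p hp =>
    hFprime p (Multiset.mem_of_mem_filter hp)
  have hb₂prime : ∀ p ∈ F.filter (fun p => ¬ P p), Prime p := fun p hp =>
    hFprime p (Multiset.mem_of_mem_filter hp)
  have hb₁0 : b₁ ≠ ⊥ := by
    rw [← Ideal.zero_eq_bot]
    exact Multiset.prod_ne_zero fun h => (hb₁prime 0 h).ne_zero rfl
  have hb₂0 : b₂ ≠ ⊥ := by
    rw [← Ideal.zero_eq_bot]
    exact Multiset.prod_ne_zero fun h => (hb₂prime 0 h).ne_zero rfl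
  have hnfb₁ : normalizedFactors b₁ = F.filter P := normalizedFactors_prod_of_prime hb₁prime
  have hnfb₂ : normalizedFactors b₂ = F.filter (fun p => ¬ P p) :=
    normalizedFactors_prod_of_prime hb₂prime
  have hmul : b₁ * b₂ = q := by
    rw [hb₁def, hb₂def, ← Multiset.prod_add, Multiset.filter_add_not P F, hF]
    exact prod_normalizedFactors_eq_self hq
  have hcop : b₁ ⊔ b₂ = ⊤ := by
    refine Ideal.sup_multiset_prod_eq_top fun p hp => ?_
    rw [sup_comm]
    refine Ideal.sup_multiset_prod_eq_top fun p' hp' => ?_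
    have hne : p ≠ p' := by
      intro h
      exact (Multiset.of_mem_filter hp) (h ▸ Multiset.of_mem_filter hp')
    exact (hFmax p (Multiset.mem_of_mem_filter hp)).coprime_of_ne
      (hFmax p' (Multiset.mem_of_mem_filter hp')) hne
  have hq₁b₂ : q₁ * b₂ ≠ ⊥ := fun h => (Ideal.mul_eq_bot.1 h).elim h1 hb₂0
  have hq₂b₁ : q₂ * b₁ ≠ ⊥ := fun h => (Ideal.mul_eq_bot.1 h).elim h2 hb₁0
  have hinter_prime : ∀ p ∈ normalizedFactors (q₁ * b₂) ∩ normalizedFactors (q₂ * b₁),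
      Prime p := fun p hp => prime_of_normalized_factor p (Multiset.mem_inter.1 hp).1
  have hX0 : (normalizedFactors (q₁ * b₂) ∩ normalizedFactors (q₂ * b₁)).prod ≠ 0 :=
    Multiset.prod_ne_zero fun h => (hinter_prime 0 h).ne_zero rfl
  have hcount : ∀ p : Ideal D,
      (normalizedFactors (q₁ * b₂) ∩ normalizedFactors (q₂ * b₁)).count p
        ≤ min ((normalizedFactors q₁).count p) ((normalizedFactors q₂).count p) := by
    intro p
    rw [Multiset.count_inter, normalizedFactors_mul h1 hb₂0, normalizedFactors_mul h2 hb₁0,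
      Multiset.count_add, Multiset.count_add, hnfb₁, hnfb₂]
    by_cases hp : P p
    · have hz : (F.filter (fun p => ¬ P p)).count p = 0 :=
        Multiset.count_filter_of_neg (by simp [hp])
      rw [hz]
      exact le_min (min_le_left _ _)
        (le_trans (min_le_left _ _) (by simpa using hp))
    · have hz : (F.filter P).count p = 0 := Multiset.count_filter_of_neg hp
      rw [hz]
      exact le_min (le_trans (min_le_right _ _) (by simpa using le_of_not_ge hp))
        (min_le_right _ _)
  refine ⟨b₁, b₂, hmul, hcop, sup_le ?_ ?_⟩
  · rw [← Ideal.dvd_iff_le, sup_eq_prod_inf_factors hq₁b₂ hq₂b₁,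
      dvd_iff_normalizedFactors_le_normalizedFactors hX0 h1,
      normalizedFactors_prod_of_prime hinter_prime, Multiset.le_iff_count]
    exact fun p => le_trans (hcount p) (min_le_left _ _)
  · rw [← Ideal.dvd_iff_le, sup_eq_prod_inf_factors hq₁b₂ hq₂b₁,
      dvd_iff_normalizedFactors_le_normalizedFactors hX0 h2,
      normalizedFactors_prod_of_prime hinter_prime, Multiset.le_iff_count]
    exact fun p => le_trans (hcount p) (min_le_right _ _)

end Split

/-- Theorem 2.7. Let `H` be a congruence subgroup of `SL₂(D)`,
`g₁, g₂ ∈ SL₂(D)` and `q₁, q₂` nonzero ideals with `gᵢ T(x) gᵢ⁻¹ ∈ H` for all `x ∈ qᵢ`.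
Then there is `g₀ ∈ SL₂(D)` with `g₀ T(x) g₀⁻¹ ∈ H` for all `x ∈ q₁ + q₂`. -/
theorem statement5 {D : Type*} [CommRing D] [IsDomain D] [IsDedekindDomain D]
    (H : Subgroup (Matrix.SpecialLinearGroup (Fin 2) D)) (hH : IsCongruence H)
    (g₁ g₂ : Matrix.SpecialLinearGroup (Fin 2) D) (q₁ q₂ : Ideal D)
    (hq₁ : q₁ ≠ ⊥) (hq₂ : q₂ ≠ ⊥)
    (h₁ : ∀ x ∈ q₁, g₁ * Tm D x * g₁⁻¹ ∈ H)
    (h₂ : ∀ x ∈ q₂, g₂ * Tm D x * g₂⁻¹ ∈ H) :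
    ∃ g₀ : Matrix.SpecialLinearGroup (Fin 2) D,
      ∀ x ∈ q₁ + q₂, g₀ * Tm D x * g₀⁻¹ ∈ H := by
  obtain ⟨q, hq0, hqH⟩ := hH
  obtain ⟨b₁, b₂, hmul, hcop, hle⟩ := exists_split hq0 hq₁ hq₂
  have hb₁ : b₁ ≠ ⊥ := fun h => hq0 (by rw [← hmul]; exact Ideal.mul_eq_bot.2 (Or.inl h))
  have hb₂ : b₂ ≠ ⊥ := fun h => hq0 (by rw [← hmul]; exact Ideal.mul_eq_bot.2 (Or.inr h))
  obtain ⟨g₀, hg1, hg2⟩ := exists_SL2_approx hb₁ hb₂ hcop g₁ g₂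
  have key : ∀ (g gref : Matrix.SpecialLinearGroup (Fin 2) D) (a b' : Ideal D) (y : D),
      y ∈ a → a * b' ≤ q → EntryCong b' g gref →
      gref * Tm D y * gref⁻¹ ∈ H → g * Tm D y * g⁻¹ ∈ H := by
    intro g gref a b' y hy hab hcong hmem
    have h3 : EntryCong (a * b') (g * Tm D y * g⁻¹) (gref * Tm D y * gref⁻¹) :=
      entryCong_conj (hcong 0 0) (hcong 1 0) hy
    have h4 : g * Tm D y * g⁻¹ * (gref * Tm D y * gref⁻¹)⁻¹ ∈ H :=
      hqH (SLmod_mono hab (mul_inv_mem_SLmod h3))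
    have h5 := mul_mem h4 hmem
    rwa [inv_mul_cancel_right] at h5
  refine ⟨g₀, fun x hx => ?_⟩
  have hx' : x ∈ q₁ * b₂ ⊔ q₂ * b₁ := hle (by rwa [← Submodule.add_eq_sup])
  obtain ⟨x₁, hx₁, x₂, hx₂, rfl⟩ := Submodule.mem_sup.1 hx'
  have m1 : g₀ * Tm D x₁ * g₀⁻¹ ∈ H := by
    refine key g₀ g₁ (q₁ * b₂) b₁ x₁ hx₁ ?_ hg1 (h₁ x₁ (Ideal.mul_le_left hx₁))
    rw [mul_assoc, mul_comm b₂ b₁, hmul]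
    exact Ideal.mul_le_right
  have m2 : g₀ * Tm D x₂ * g₀⁻¹ ∈ H := by
    refine key g₀ g₂ (q₂ * b₁) b₂ x₂ hx₂ ?_ hg2 (h₂ x₂ (Ideal.mul_le_left hx₂))
    rw [mul_assoc, hmul]
    exact Ideal.mul_le_right
  have hsplit : g₀ * Tm D (x₁ + x₂) * g₀⁻¹
      = (g₀ * Tm D x₁ * g₀⁻¹) * (g₀ * Tm D x₂ * g₀⁻¹) := by
    rw [Tm_add]
    group
  rw [hsplit]
  exact mul_mem m1 m2
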